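/- arXiv:2205.08596 — 2 statements merged into one kernel-verified Lean document; each statement's English description precedes it below -/
import Mathlib

section
/- Let k be a field and H a regular Hopf algebra over k. Then every Hopf subalgebra H' of H is also regular. -/
open TensorProduct CategoryTheory CategoryTheory.Limits

noncomputable section

universe u

section PartialComodules

variable (k : Type u) [Field k] (H : Type u) [Ring H] [HopfAlgebra k H]

/-- Multiply the last two tensor factors using the multiplication of `H`. -/
def mulLast (X : Type u) [AddCommGroup X] [Module k X] :
    ((X ⊗[k] H) ⊗[k] H) →ₗ[k] X ⊗[k] H :=
  (LinearMap.lTensor X (LinearMap.mul' k H)) ∘ₗ (TensorProduct.assoc k X H H).toLinearMap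

/-- Comultiply the last tensor factor using the comultiplication of `H`. -/
def comulLast (X : Type u) [AddCommGroup X] [Module k X] :
    (X ⊗[k] H) →ₗ[k] (X ⊗[k] H) ⊗[k] H :=
  (TensorProduct.assoc k X H H).symm.toLinearMap ∘ₗ LinearMap.lTensor X Coalgebra.comul

/-- Apply the antipode to the last tensor factor. -/
def antLast (X : Type u) [AddCommGroup X] [Module k X] :
    (X ⊗[k] H) →ₗ[k] X ⊗[k] H :=
  LinearMap.lTensor X (HopfAlgebra.antipode (R := k) (A := H))

/-- Apply the counit to the last tensor factor. -/
def counitLast (X : Type u) [AddCommGroup X] [Module k X] :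
    (X ⊗[k] H) →ₗ[k] X :=
  (TensorProduct.rid k X).toLinearMap ∘ₗ LinearMap.lTensor X Coalgebra.counit

/-- `(M, ρ)` is a (right, algebraic) partial `H`-comodule: (PCM1) `ρ` is counital, while
(PCM2) and (PCM3) express the partial coassociativity. -/
structure IsPartialComodule {M : Type u} [AddCommGroup M] [Module k M]
    (ρ : M →ₗ[k] M ⊗[k] H) : Prop where
  counit : counitLast k H M ∘ₗ ρ = LinearMap.id
  pcm2 :
    mulLast k H (M ⊗[k] H) ∘ₗ antLast k H ((M ⊗[k] H) ⊗[k] H) ∘ₗ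
        LinearMap.rTensor H (comulLast k H M) ∘ₗ LinearMap.rTensor H ρ ∘ₗ ρ =
    mulLast k H (M ⊗[k] H) ∘ₗ antLast k H ((M ⊗[k] H) ⊗[k] H) ∘ₗ
        LinearMap.rTensor H (LinearMap.rTensor H ρ) ∘ₗ LinearMap.rTensor H ρ ∘ₗ ρ
  pcm3 :
    LinearMap.rTensor H (mulLast k H M) ∘ₗ LinearMap.rTensor H (antLast k H (M ⊗[k] H)) ∘ₗ
        comulLast k H (M ⊗[k] H) ∘ₗ LinearMap.rTensor H ρ ∘ₗ ρ =
    LinearMap.rTensor H (mulLast k H M) ∘ₗ LinearMap.rTensor H (antLast k H (M ⊗[k] H)) ∘ₗ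
        LinearMap.rTensor H (LinearMap.rTensor H ρ) ∘ₗ LinearMap.rTensor H ρ ∘ₗ ρ

/-- A subspace `N` is a partial subcomodule when it is invariant under the coaction. -/
def IsSubcomodule {M : Type u} [AddCommGroup M] [Module k M]
    (ρ : M →ₗ[k] M ⊗[k] H) (N : Submodule k M) : Prop :=
  ∀ n ∈ N, ρ n ∈ LinearMap.range (LinearMap.rTensor H N.subtype)

end PartialComodules

section Regular

variable (k : Type u) [Field k] (H : Type u) [Ring H] [HopfAlgebra k H]

/-- A partial comodule is regular when it is the sum of its finite-dimensional partial
subcomodules. -/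
def IsRegularComodule {M : Type u} [AddCommGroup M] [Module k M]
    (ρ : M →ₗ[k] M ⊗[k] H) : Prop :=
  sSup { N : Submodule k M | IsSubcomodule k H ρ N ∧ FiniteDimensional k ↥N } = ⊤

/-- A Hopf algebra is regular when every partial comodule over it is regular. -/
def IsRegularHopf : Prop :=
  ∀ (M : Type u) (_ : AddCommGroup M) (_ : Module k M) (ρ : M →ₗ[k] M ⊗[k] H),
    IsPartialComodule k H ρ → IsRegularComodule k H ρ

end Regular


section Aux

variable (k : Type u) [Field k] (H : Type u) [Ring H] [HopfAlgebra k H]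
  (H' : Type u) [Ring H'] [HopfAlgebra k H'] (ι : H' →ₐc[k] H)

variable (X Y : Type u) [AddCommGroup X] [Module k X] [AddCommGroup Y] [Module k Y]

theorem mulLast_nat (g : X →ₗ[k] Y) :
    mulLast k H Y ∘ₗ LinearMap.rTensor H (LinearMap.rTensor H g)
      = LinearMap.rTensor H g ∘ₗ mulLast k H X := by
  ext x y z
  simp [mulLast, LinearMap.mul'_apply]

theorem antLast_nat (g : X →ₗ[k] Y) :
    antLast k H Y ∘ₗ LinearMap.rTensor H g = LinearMap.rTensor H g ∘ₗ antLast k H X := by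
  ext x y
  simp [antLast]

theorem comulLast_nat (g : X →ₗ[k] Y) :
    comulLast k H Y ∘ₗ LinearMap.rTensor H g
      = LinearMap.rTensor H (LinearMap.rTensor H g) ∘ₗ comulLast k H X := by
  ext x y
  simp only [comulLast, LinearMap.coe_comp, Function.comp_apply, LinearMap.rTensor_tmul,
    LinearMap.lTensor_tmul, LinearEquiv.coe_coe, TensorProduct.AlgebraTensorModule.curry_apply,
    TensorProduct.curry_apply, LinearMap.coe_restrictScalars]
  have h := TensorProduct.map_map_assoc_symm g (LinearMap.id (R := k) (M := H))
    (LinearMap.id (R := k) (M := H)) (x ⊗ₜ[k] (Coalgebra.comul (R := k) y))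
  simp only [TensorProduct.map_id, TensorProduct.map_tmul, LinearMap.id_coe, id_eq] at h
  rw [show LinearMap.rTensor H (LinearMap.rTensor H g)
      = TensorProduct.map (TensorProduct.map g LinearMap.id) LinearMap.id from rfl]
  rw [h]

theorem mulLast_ι :
    mulLast k H X ∘ₗ TensorProduct.map (LinearMap.lTensor X ι.toLinearMap) ι.toLinearMap
      = LinearMap.lTensor X ι.toLinearMap ∘ₗ mulLast k H' X := by
  ext x y z
  simp [mulLast, LinearMap.mul'_apply]
  exact congrArg (x ⊗ₜ[k] ·) (map_mul ι y z).symm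

theorem antLast_ι (hS : ∀ a : H', ι (HopfAlgebra.antipode (R := k) a) =
      HopfAlgebra.antipode (R := k) (ι a)) :
    antLast k H X ∘ₗ LinearMap.lTensor X ι.toLinearMap
      = LinearMap.lTensor X ι.toLinearMap ∘ₗ antLast k H' X := by
  ext x y
  simp [antLast]
  exact congrArg (x ⊗ₜ[k] ·) (hS y).symm

theorem antLast_ι' (hS : ∀ a : H', ι (HopfAlgebra.antipode (R := k) a) =
      HopfAlgebra.antipode (R := k) (ι a)) (f : X →ₗ[k] Y) :
    antLast k H Y ∘ₗ TensorProduct.map f ι.toLinearMap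
      = TensorProduct.map f ι.toLinearMap ∘ₗ antLast k H' X := by
  ext x y
  simp [antLast]
  exact congrArg (f x ⊗ₜ[k] ·) (hS y).symm

theorem counitLast_ι :
    counitLast k H X ∘ₗ LinearMap.lTensor X ι.toLinearMap = counitLast k H' X := by
  ext x y
  simp [counitLast]

theorem comulLast_ι :
    comulLast k H X ∘ₗ LinearMap.lTensor X ι.toLinearMap
      = TensorProduct.map (LinearMap.lTensor X ι.toLinearMap) ι.toLinearMap
          ∘ₗ comulLast k H' X := by
  ext x y
  simp only [comulLast, LinearMap.coe_comp, Function.comp_apply, LinearMap.lTensor_tmul,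
    LinearEquiv.coe_coe, TensorProduct.AlgebraTensorModule.curry_apply,
    TensorProduct.curry_apply, LinearMap.coe_restrictScalars]
  rw [show Coalgebra.comul (R := k) (ι.toLinearMap y)
      = TensorProduct.map ι.toLinearMap ι.toLinearMap (Coalgebra.comul y) from
    (CoalgHomClass.map_comp_comul_apply ι y).symm]
  have h := TensorProduct.map_map_assoc_symm (LinearMap.id (R := k) (M := X))
    ι.toLinearMap ι.toLinearMap (x ⊗ₜ[k] (Coalgebra.comul (R := k) y))
  simp only [TensorProduct.map_tmul, LinearMap.id_coe, id_eq] at h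
  rw [show TensorProduct.map (LinearMap.lTensor X ι.toLinearMap) ι.toLinearMap
      = TensorProduct.map (TensorProduct.map LinearMap.id ι.toLinearMap) ι.toLinearMap from rfl]
  rw [h]


theorem pushc {A B C D E : Type u} [AddCommGroup A] [Module k A] [AddCommGroup B] [Module k B]
    [AddCommGroup C] [Module k C] [AddCommGroup D] [Module k D] [AddCommGroup E] [Module k E]
    {f : B →ₗ[k] D} {g : A →ₗ[k] B} {f' : A →ₗ[k] C} {g' : C →ₗ[k] D}
    (h : f ∘ₗ g = g' ∘ₗ f') (x : E →ₗ[k] A) :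
    f ∘ₗ (g ∘ₗ x) = g' ∘ₗ (f' ∘ₗ x) := by
  rw [← LinearMap.comp_assoc, h, LinearMap.comp_assoc]

theorem pushforward (hS : ∀ a : H', ι (HopfAlgebra.antipode (R := k) a) =
      HopfAlgebra.antipode (R := k) (ι a))
    (M : Type u) [AddCommGroup M] [Module k M] (ρ' : M →ₗ[k] M ⊗[k] H')
    (hpc : IsPartialComodule k H' ρ') :
    IsPartialComodule k H (LinearMap.lTensor M ι.toLinearMap ∘ₗ ρ') := by
  set ιL := ι.toLinearMap with hιL
  set i1 : M ⊗[k] H' →ₗ[k] M ⊗[k] H := LinearMap.lTensor M ιL with hi1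
  set ρ : M →ₗ[k] M ⊗[k] H := i1 ∘ₗ ρ' with hρdef
  set i2 : (M ⊗[k] H') ⊗[k] H' →ₗ[k] (M ⊗[k] H) ⊗[k] H := TensorProduct.map i1 ιL with hi2
  set i3 : ((M ⊗[k] H') ⊗[k] H') ⊗[k] H' →ₗ[k] ((M ⊗[k] H) ⊗[k] H) ⊗[k] H :=
    TensorProduct.map i2 ιL with hi3
  have hi2split : i2 = LinearMap.rTensor H i1 ∘ₗ LinearMap.lTensor (M ⊗[k] H') ιL := by
    rw [hi2, LinearMap.rTensor_comp_lTensor]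
  have h1 : LinearMap.rTensor H ρ ∘ₗ i1 = i2 ∘ₗ LinearMap.rTensor H' ρ' := by
    rw [hρdef, hi1, hi2]
    ext m y
    simp
    rfl
  have h1' : LinearMap.rTensor H ρ ∘ₗ ρ = i2 ∘ₗ (LinearMap.rTensor H' ρ' ∘ₗ ρ') := by
    rw [hρdef, ← LinearMap.comp_assoc, h1, LinearMap.comp_assoc]
  have h2 : LinearMap.rTensor H (comulLast k H M) ∘ₗ i2
      = i3 ∘ₗ LinearMap.rTensor H' (comulLast k H' M) := by
    rw [hi2, LinearMap.rTensor_comp_map, comulLast_ι k H H' ι M, ← hιL, ← hi1, ← hi2, hi3,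
      ← LinearMap.map_comp_rTensor]
  have h3 : antLast k H ((M ⊗[k] H) ⊗[k] H) ∘ₗ i3
      = i3 ∘ₗ antLast k H' ((M ⊗[k] H') ⊗[k] H') := by
    rw [hi3, hιL]
    exact antLast_ι' k H H' ι _ _ hS i2
  have h4 : mulLast k H (M ⊗[k] H) ∘ₗ i3 = i2 ∘ₗ mulLast k H' (M ⊗[k] H') := by
    have e : i3 = LinearMap.rTensor H (LinearMap.rTensor H i1)
        ∘ₗ TensorProduct.map (LinearMap.lTensor (M ⊗[k] H') ιL) ιL := by
      rw [hi3, hi2split, ← LinearMap.rTensor_comp_map]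
    rw [e, ← LinearMap.comp_assoc, mulLast_nat k H _ _ i1, LinearMap.comp_assoc,
      mulLast_ι k H H' ι (M ⊗[k] H'), ← LinearMap.comp_assoc, ← hi2split]
  have h5 : LinearMap.rTensor H (LinearMap.rTensor H ρ) ∘ₗ i2
      = i3 ∘ₗ LinearMap.rTensor H' (LinearMap.rTensor H' ρ') := by
    rw [hi2, LinearMap.rTensor_comp_map, h1, hi3, ← LinearMap.map_comp_rTensor]
  have h6 : antLast k H (M ⊗[k] H) ∘ₗ i2 = i2 ∘ₗ antLast k H' (M ⊗[k] H') := by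
    rw [hi2, hιL]
    exact antLast_ι' k H H' ι _ _ hS i1
  have h7 : comulLast k H (M ⊗[k] H) ∘ₗ i2 = i3 ∘ₗ comulLast k H' (M ⊗[k] H') := by
    rw [hi2split, ← LinearMap.comp_assoc, comulLast_nat k H _ _ i1, LinearMap.comp_assoc,
      comulLast_ι k H H' ι (M ⊗[k] H'), ← LinearMap.comp_assoc, ← hιL,
      LinearMap.rTensor_comp_map, ← hi2split, ← hi3]
  have h8 : LinearMap.rTensor H (antLast k H (M ⊗[k] H)) ∘ₗ i3
      = i3 ∘ₗ LinearMap.rTensor H' (antLast k H' (M ⊗[k] H')) := by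
    rw [hi3, LinearMap.rTensor_comp_map, h6, ← LinearMap.map_comp_rTensor, ← hi3]
  have h9 : LinearMap.rTensor H (mulLast k H M) ∘ₗ i3
      = i2 ∘ₗ LinearMap.rTensor H' (mulLast k H' M) := by
    rw [hi3, LinearMap.rTensor_comp_map, hi2,
      show mulLast k H M ∘ₗ TensorProduct.map i1 ιL = i1 ∘ₗ mulLast k H' M from by
        rw [hi1, hιL]; exact mulLast_ι k H H' ι M,
      ← LinearMap.map_comp_rTensor, ← hi2]
  constructor
  · rw [hρdef, ← LinearMap.comp_assoc, hi1, hιL, counitLast_ι k H H' ι M]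
    exact hpc.counit
  · have e1 : LinearMap.rTensor H (comulLast k H M) ∘ₗ (i2 ∘ₗ (LinearMap.rTensor H' ρ' ∘ₗ ρ')) = i3 ∘ₗ (LinearMap.rTensor H' (comulLast k H' M) ∘ₗ (LinearMap.rTensor H' ρ' ∘ₗ ρ')) := by
      rw [← LinearMap.comp_assoc, h2, LinearMap.comp_assoc]
    have e2 : antLast k H ((M ⊗[k] H) ⊗[k] H) ∘ₗ (i3 ∘ₗ (LinearMap.rTensor H' (comulLast k H' M) ∘ₗ (LinearMap.rTensor H' ρ' ∘ₗ ρ'))) = i3 ∘ₗ (antLast k H' ((M ⊗[k] H') ⊗[k] H') ∘ₗ (LinearMap.rTensor H' (comulLast k H' M) ∘ₗ (LinearMap.rTensor H' ρ' ∘ₗ ρ'))) := by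
      rw [← LinearMap.comp_assoc, h3, LinearMap.comp_assoc]
    have e3 : mulLast k H (M ⊗[k] H) ∘ₗ (i3 ∘ₗ (antLast k H' ((M ⊗[k] H') ⊗[k] H') ∘ₗ (LinearMap.rTensor H' (comulLast k H' M) ∘ₗ (LinearMap.rTensor H' ρ' ∘ₗ ρ')))) = i2 ∘ₗ (mulLast k H' (M ⊗[k] H') ∘ₗ (antLast k H' ((M ⊗[k] H') ⊗[k] H') ∘ₗ (LinearMap.rTensor H' (comulLast k H' M) ∘ₗ (LinearMap.rTensor H' ρ' ∘ₗ ρ')))) := by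
      rw [← LinearMap.comp_assoc, h4, LinearMap.comp_assoc]
    have e4 : LinearMap.rTensor H (LinearMap.rTensor H ρ) ∘ₗ (i2 ∘ₗ (LinearMap.rTensor H' ρ' ∘ₗ ρ')) = i3 ∘ₗ (LinearMap.rTensor H' (LinearMap.rTensor H' ρ') ∘ₗ (LinearMap.rTensor H' ρ' ∘ₗ ρ')) := by
      rw [← LinearMap.comp_assoc, h5, LinearMap.comp_assoc]
    have e5 : antLast k H ((M ⊗[k] H) ⊗[k] H) ∘ₗ (i3 ∘ₗ (LinearMap.rTensor H' (LinearMap.rTensor H' ρ') ∘ₗ (LinearMap.rTensor H' ρ' ∘ₗ ρ'))) = i3 ∘ₗ (antLast k H' ((M ⊗[k] H') ⊗[k] H') ∘ₗ (LinearMap.rTensor H' (LinearMap.rTensor H' ρ') ∘ₗ (LinearMap.rTensor H' ρ' ∘ₗ ρ'))) := by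
      rw [← LinearMap.comp_assoc, h3, LinearMap.comp_assoc]
    have e6 : mulLast k H (M ⊗[k] H) ∘ₗ (i3 ∘ₗ (antLast k H' ((M ⊗[k] H') ⊗[k] H') ∘ₗ (LinearMap.rTensor H' (LinearMap.rTensor H' ρ') ∘ₗ (LinearMap.rTensor H' ρ' ∘ₗ ρ')))) = i2 ∘ₗ (mulLast k H' (M ⊗[k] H') ∘ₗ (antLast k H' ((M ⊗[k] H') ⊗[k] H') ∘ₗ (LinearMap.rTensor H' (LinearMap.rTensor H' ρ') ∘ₗ (LinearMap.rTensor H' ρ' ∘ₗ ρ')))) := by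
      rw [← LinearMap.comp_assoc, h4, LinearMap.comp_assoc]
    rw [h1', e1, e2, e3, e4, e5, e6, hpc.pcm2]
  · have e1 : comulLast k H (M ⊗[k] H) ∘ₗ (i2 ∘ₗ (LinearMap.rTensor H' ρ' ∘ₗ ρ')) = i3 ∘ₗ (comulLast k H' (M ⊗[k] H') ∘ₗ (LinearMap.rTensor H' ρ' ∘ₗ ρ')) := by
      rw [← LinearMap.comp_assoc, h7, LinearMap.comp_assoc]
    have e2 : LinearMap.rTensor H (antLast k H (M ⊗[k] H)) ∘ₗ (i3 ∘ₗ (comulLast k H' (M ⊗[k] H') ∘ₗ (LinearMap.rTensor H' ρ' ∘ₗ ρ'))) = i3 ∘ₗ (LinearMap.rTensor H' (antLast k H' (M ⊗[k] H')) ∘ₗ (comulLast k H' (M ⊗[k] H') ∘ₗ (LinearMap.rTensor H' ρ' ∘ₗ ρ'))) := by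
      rw [← LinearMap.comp_assoc, h8, LinearMap.comp_assoc]
    have e3 : LinearMap.rTensor H (mulLast k H M) ∘ₗ (i3 ∘ₗ (LinearMap.rTensor H' (antLast k H' (M ⊗[k] H')) ∘ₗ (comulLast k H' (M ⊗[k] H') ∘ₗ (LinearMap.rTensor H' ρ' ∘ₗ ρ')))) = i2 ∘ₗ (LinearMap.rTensor H' (mulLast k H' M) ∘ₗ (LinearMap.rTensor H' (antLast k H' (M ⊗[k] H')) ∘ₗ (comulLast k H' (M ⊗[k] H') ∘ₗ (LinearMap.rTensor H' ρ' ∘ₗ ρ')))) := by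
      rw [← LinearMap.comp_assoc, h9, LinearMap.comp_assoc]
    have e4 : LinearMap.rTensor H (LinearMap.rTensor H ρ) ∘ₗ (i2 ∘ₗ (LinearMap.rTensor H' ρ' ∘ₗ ρ')) = i3 ∘ₗ (LinearMap.rTensor H' (LinearMap.rTensor H' ρ') ∘ₗ (LinearMap.rTensor H' ρ' ∘ₗ ρ')) := by
      rw [← LinearMap.comp_assoc, h5, LinearMap.comp_assoc]
    have e5 : LinearMap.rTensor H (antLast k H (M ⊗[k] H)) ∘ₗ (i3 ∘ₗ (LinearMap.rTensor H' (LinearMap.rTensor H' ρ') ∘ₗ (LinearMap.rTensor H' ρ' ∘ₗ ρ'))) = i3 ∘ₗ (LinearMap.rTensor H' (antLast k H' (M ⊗[k] H')) ∘ₗ (LinearMap.rTensor H' (LinearMap.rTensor H' ρ') ∘ₗ (LinearMap.rTensor H' ρ' ∘ₗ ρ'))) := by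
      rw [← LinearMap.comp_assoc, h8, LinearMap.comp_assoc]
    have e6 : LinearMap.rTensor H (mulLast k H M) ∘ₗ (i3 ∘ₗ (LinearMap.rTensor H' (antLast k H' (M ⊗[k] H')) ∘ₗ (LinearMap.rTensor H' (LinearMap.rTensor H' ρ') ∘ₗ (LinearMap.rTensor H' ρ' ∘ₗ ρ')))) = i2 ∘ₗ (LinearMap.rTensor H' (mulLast k H' M) ∘ₗ (LinearMap.rTensor H' (antLast k H' (M ⊗[k] H')) ∘ₗ (LinearMap.rTensor H' (LinearMap.rTensor H' ρ') ∘ₗ (LinearMap.rTensor H' ρ' ∘ₗ ρ')))) := by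
      rw [← LinearMap.comp_assoc, h9, LinearMap.comp_assoc]
    rw [h1', e1, e2, e3, e4, e5, e6, hpc.pcm3]


end Aux

/-- If `H` is a regular Hopf algebra, then every Hopf subalgebra of `H`
(here presented as a Hopf algebra `H'` together with an injective morphism of Hopf algebras
`ι : H' → H`) is regular as well. -/
theorem hopfSubalgebra_regular
    (k : Type u) [Field k] (H : Type u) [Ring H] [HopfAlgebra k H]
    (H' : Type u) [Ring H'] [HopfAlgebra k H']
    (ι : H' →ₐc[k] H) (hinj : Function.Injective ι)
    (hS : ∀ a : H', ι (HopfAlgebra.antipode (R := k) a) =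
      HopfAlgebra.antipode (R := k) (ι a))
    (hreg : IsRegularHopf k H) :
    IsRegularHopf k H' := by
  classical
  intro M iAG iMod ρ' hpc
  letI := iAG; letI := iMod
  set ιL := ι.toLinearMap with hιL
  set i1 : M ⊗[k] H' →ₗ[k] M ⊗[k] H := LinearMap.lTensor M ιL with hi1
  set ρ : M →ₗ[k] M ⊗[k] H := i1 ∘ₗ ρ' with hρdef
  have hpcH : IsPartialComodule k H ρ := pushforward k H H' ι hS M ρ' hpc
  have hRH := hreg M iAG iMod ρ hpcH
  have key : ∀ N : Submodule k M, IsSubcomodule k H ρ N → IsSubcomodule k H' ρ' N := by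
    intro N hN n hn
    have h0 : ρ n ∈ LinearMap.range (LinearMap.rTensor H N.subtype) := hN n hn
    have h0' : LinearMap.rTensor H N.mkQ (ρ n) = 0 := by
      rw [← LinearMap.mem_ker, rTensor_mkQ H N]
      exact h0
    have hcomm : LinearMap.rTensor H N.mkQ ∘ₗ i1
        = LinearMap.lTensor (M ⧸ N) ιL ∘ₗ LinearMap.rTensor H' N.mkQ := by
      rw [hi1, LinearMap.rTensor_comp_lTensor, LinearMap.lTensor_comp_rTensor]
    have hz : LinearMap.lTensor (M ⧸ N) ιL (LinearMap.rTensor H' N.mkQ (ρ' n)) = 0 := by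
      have e := LinearMap.congr_fun hcomm (ρ' n)
      simp only [LinearMap.coe_comp, Function.comp_apply] at e
      rw [← e]
      exact h0'
    have hinjL : Function.Injective ιL := fun a b hab => hinj hab
    have hinjT : Function.Injective (LinearMap.lTensor (M ⧸ N) ιL) :=
      Module.Flat.lTensor_preserves_injective_linearMap ιL hinjL
    rw [← rTensor_mkQ H' N, LinearMap.mem_ker]
    exact hinjT (by rw [hz, map_zero])
  have hsub : { N : Submodule k M | IsSubcomodule k H ρ N ∧ FiniteDimensional k ↥N }
      ⊆ { N : Submodule k M | IsSubcomodule k H' ρ' N ∧ FiniteDimensional k ↥N } :=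
    fun N hN => ⟨key N hN.1, hN.2⟩
  unfold IsRegularComodule at hRH ⊢
  exact top_unique (hRH ▸ sSup_le_sSup hsub)

end
end

section
/- Let H be a Hopf algebra over a field k, M a k-vector space and ρ : M → M ⊗ H an arbitrary linear map. Let N be the set of all m ∈ M satisfying, for all n ≥ 1: (A1) (M ⊗ ε ⊗ H^{⊗(n−1)}) ρⁿ(m) = ρ^{n−1}(m); (A2) (M ⊗ H ⊗ μ ⊗ H^{⊗(n−1)})(M ⊗ H ⊗ H ⊗ S ⊗ H^{⊗(n−1)})(M ⊗ Δ ⊗ H^{⊗n}) ρ^{n+1}(m) = (M ⊗ H ⊗ μ ⊗ H^{⊗(n−1)})(M ⊗ H ⊗ H ⊗ S ⊗ H^{⊗(n−1)}) ρ^{n+2}(m); (A3) (M ⊗ μ ⊗ H^{⊗n})(M ⊗ H ⊗ S ⊗ H^{⊗n})(M ⊗ H ⊗ Δ ⊗ H^{⊗(n−1)}) ρ^{n+1}(m) = (M ⊗ μ ⊗ H^{⊗n})(M ⊗ H ⊗ S ⊗ H^{⊗n}) ρ^{n+2}(m). Then N is the largest subspace of M (with respect to inclusion) such that ρ(N) ⊆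 N ⊗ H and (N, ρ|_N) is a partial H-comodule; moreover it contains every subspace N' ⊆ M with ρ(N') ⊆ N' ⊗ H for which (N', ρ|_{N'}) is a partial H-comodule. -/
open TensorProduct CategoryTheory CategoryTheory.Limits

noncomputable section

universe u

section TPow

variable (k : Type u) [Field k] (H : Type u) [Ring H] [HopfAlgebra k H]
variable (M : Type u) [AddCommGroup M] [Module k M]


/-- The iterated tensor product `M ⊗ H^{⊗n}` (with all tensor factors associated to the
left), as a bundled `k`-module. -/
def TPow : ℕ → ModuleCat.{u} k
  | 0 => ModuleCat.of k M
  | n + 1 => ModuleCat.of k (TPow n ⊗[k] H)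

variable {M}

/-- `ρ ⊗ H^{⊗n} : M ⊗ H^{⊗n} → M ⊗ H^{⊗(n+1)}`. -/
def deepCoact (ρ : M →ₗ[k] M ⊗[k] H) : ∀ n : ℕ, TPow k H M n →ₗ[k] TPow k H M (n + 1)
  | 0 => ρ
  | n + 1 => LinearMap.rTensor H (deepCoact ρ n)

/-- The iterate `ρⁿ = (ρ ⊗ H^{⊗(n-1)}) ∘ ρ^{n-1} : M → M ⊗ H^{⊗n}`, with `ρ⁰ = id`. -/
def coactPow (ρ : M →ₗ[k] M ⊗[k] H) : ∀ n : ℕ, M →ₗ[k] TPow k H M n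
  | 0 => LinearMap.id
  | n + 1 => deepCoact k H ρ n ∘ₗ coactPow ρ n

/-- `M ⊗ ε ⊗ H^{⊗m} : M ⊗ H^{⊗(1+m)} → M ⊗ H^{⊗m}`. -/
def opCounit : ∀ m : ℕ, TPow k H M (1 + m) →ₗ[k] TPow k H M (0 + m)
  | 0 => counitLast k H M
  | m + 1 => LinearMap.rTensor H (opCounit m)

/-- `(M ⊗ H ⊗ μ)(M ⊗ H ⊗ H ⊗ S)(M ⊗ Δ ⊗ H) ⊗ H^{⊗m}` on `M ⊗ H^{⊗(2+m)}`. -/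
def opA2L : ∀ m : ℕ, TPow k H M (2 + m) →ₗ[k] TPow k H M (2 + m)
  | 0 => mulLast k H (M ⊗[k] H) ∘ₗ antLast k H ((M ⊗[k] H) ⊗[k] H) ∘ₗ
      LinearMap.rTensor H (comulLast k H M)
  | m + 1 => LinearMap.rTensor H (opA2L m)

/-- `(M ⊗ H ⊗ μ)(M ⊗ H ⊗ H ⊗ S) ⊗ H^{⊗m}` on `M ⊗ H^{⊗(3+m)}`. -/
def opA2R : ∀ m : ℕ, TPow k H M (3 + m) →ₗ[k] TPow k H M (2 + m)
  | 0 => mulLast k H (M ⊗[k] H) ∘ₗ antLast k H ((M ⊗[k] H) ⊗[k] H)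
  | m + 1 => LinearMap.rTensor H (opA2R m)

/-- `(M ⊗ μ ⊗ H)(M ⊗ H ⊗ S ⊗ H)(M ⊗ H ⊗ Δ) ⊗ H^{⊗m}` on `M ⊗ H^{⊗(2+m)}`. -/
def opA3L : ∀ m : ℕ, TPow k H M (2 + m) →ₗ[k] TPow k H M (2 + m)
  | 0 => LinearMap.rTensor H (mulLast k H M) ∘ₗ
      LinearMap.rTensor H (antLast k H (M ⊗[k] H)) ∘ₗ comulLast k H (M ⊗[k] H)
  | m + 1 => LinearMap.rTensor H (opA3L m)

/-- `(M ⊗ μ ⊗ H)(M ⊗ H ⊗ S ⊗ H) ⊗ H^{⊗m}` on `M ⊗ H^{⊗(3+m)}`. -/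
def opA3R : ∀ m : ℕ, TPow k H M (3 + m) →ₗ[k] TPow k H M (2 + m)
  | 0 => LinearMap.rTensor H (mulLast k H M) ∘ₗ
      LinearMap.rTensor H (antLast k H (M ⊗[k] H))
  | m + 1 => LinearMap.rTensor H (opA3R m)


end TPow


section MyAux

variable (k : Type u) [Field k] (H : Type u) [Ring H] [HopfAlgebra k H]
variable {X Y : Type u} [AddCommGroup X] [Module k X] [AddCommGroup Y] [Module k Y]

lemma counitLast_natural (f : X →ₗ[k] Y) :
    counitLast k H Y ∘ₗ LinearMap.rTensor H f = f ∘ₗ counitLast k H X := by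
  ext x h
  simp [counitLast]

lemma antLast_natural (f : X →ₗ[k] Y) :
    antLast k H Y ∘ₗ LinearMap.rTensor H f = LinearMap.rTensor H f ∘ₗ antLast k H X := by
  ext x h
  simp [antLast]

lemma mulLast_natural (f : X →ₗ[k] Y) :
    mulLast k H Y ∘ₗ LinearMap.rTensor H (LinearMap.rTensor H f) =
    LinearMap.rTensor H f ∘ₗ mulLast k H X := by
  ext x h h'
  simp [mulLast]

lemma assoc_symm_nat (f : X →ₗ[k] Y) (x : X) (z : H ⊗[k] H) :
    (TensorProduct.assoc k Y H H).symm (f x ⊗ₜ[k] z) =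
    LinearMap.rTensor H (LinearMap.rTensor H f) ((TensorProduct.assoc k X H H).symm (x ⊗ₜ[k] z)) := by
  induction z using TensorProduct.induction_on with
  | zero => simp
  | tmul a b => simp
  | add a b ha hb => simp [tmul_add, ha, hb]

lemma comulLast_natural (f : X →ₗ[k] Y) :
    comulLast k H Y ∘ₗ LinearMap.rTensor H f =
    LinearMap.rTensor H (LinearMap.rTensor H f) ∘ₗ comulLast k H X := by
  ext x h
  simp [comulLast, assoc_symm_nat]

/-- `f ⊗ H^{⊗ n}`. -/
def tpowMap (f : X →ₗ[k] Y) : ∀ n : ℕ, TPow k H X n →ₗ[k] TPow k H Y n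
  | 0 => f
  | n + 1 => LinearMap.rTensor H (tpowMap f n)

lemma tpowMap_succ (f : X →ₗ[k] Y) (n : ℕ) :
    tpowMap k H f (n + 1) = LinearMap.rTensor H (tpowMap k H f n) := rfl

lemma tpowMap_injective (f : X →ₗ[k] Y) (hf : Function.Injective f) :
    ∀ n : ℕ, Function.Injective (tpowMap k H f n)
  | 0 => hf
  | n + 1 => Module.Flat.rTensor_preserves_injective_linearMap _ (tpowMap_injective f hf n)

lemma opCounit_succ (m : ℕ) :
    opCounit k H (M := X) (m + 1) = LinearMap.rTensor H (opCounit k H (M := X) m) := rfl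

lemma opA2L_succ (m : ℕ) :
    opA2L k H (M := X) (m + 1) = LinearMap.rTensor H (opA2L k H (M := X) m) := rfl

lemma opA2R_succ (m : ℕ) :
    opA2R k H (M := X) (m + 1) = LinearMap.rTensor H (opA2R k H (M := X) m) := rfl

lemma opA3L_succ (m : ℕ) :
    opA3L k H (M := X) (m + 1) = LinearMap.rTensor H (opA3L k H (M := X) m) := rfl

lemma opA3R_succ (m : ℕ) :
    opA3R k H (M := X) (m + 1) = LinearMap.rTensor H (opA3R k H (M := X) m) := rfl

lemma coactPow_succ (ρ : X →ₗ[k] X ⊗[k] H) : ∀ n : ℕ,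
    coactPow k H ρ (n + 1) = LinearMap.rTensor H (coactPow k H ρ n) ∘ₗ ρ := by
  intro n
  induction n with
  | zero =>
    show ρ ∘ₗ LinearMap.id = LinearMap.rTensor H LinearMap.id ∘ₗ ρ
    rw [LinearMap.rTensor_id, LinearMap.comp_id, LinearMap.id_comp]
  | succ n ih =>
    show deepCoact k H ρ (n + 1) ∘ₗ coactPow k H ρ (n + 1) = _
    rw [ih]
    show LinearMap.rTensor H (deepCoact k H ρ n) ∘ₗ
      (LinearMap.rTensor H (coactPow k H ρ n) ∘ₗ ρ) = _
    rw [← LinearMap.comp_assoc, ← LinearMap.rTensor_comp, ← ih]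
    rfl

lemma coactPow_add_succ (ρ : X →ₗ[k] X ⊗[k] H) (a m : ℕ) :
    coactPow k H ρ (a + (m + 1)) = LinearMap.rTensor H (coactPow k H ρ (a + m)) ∘ₗ ρ :=
  coactPow_succ k H ρ (a + m)

section Natural

variable (ρX : X →ₗ[k] X ⊗[k] H) (ρY : Y →ₗ[k] Y ⊗[k] H) (f : X →ₗ[k] Y)
variable (key : LinearMap.rTensor H f ∘ₗ ρX = ρY ∘ₗ f)

include key in
lemma coactPow_natural : ∀ n : ℕ,
    tpowMap k H f n ∘ₗ coactPow k H ρX n = coactPow k H ρY n ∘ₗ f := by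
  intro n
  induction n with
  | zero => rfl
  | succ n ih =>
    rw [coactPow_succ, coactPow_succ, tpowMap_succ]
    show LinearMap.rTensor H (tpowMap k H f n) ∘ₗ (LinearMap.rTensor H (coactPow k H ρX n) ∘ₗ ρX) =
      (LinearMap.rTensor H (coactPow k H ρY n) ∘ₗ ρY) ∘ₗ f
    rw [← LinearMap.comp_assoc,
      ← LinearMap.rTensor_comp, ih, LinearMap.rTensor_comp, LinearMap.comp_assoc, key,
      ← LinearMap.comp_assoc]

end Natural

lemma opCounit_natural (f : X →ₗ[k] Y) : ∀ m : ℕ,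
    opCounit k H (M := Y) m ∘ₗ tpowMap k H f (1 + m) =
    tpowMap k H f (0 + m) ∘ₗ opCounit k H (M := X) m := by
  intro m
  induction m with
  | zero => exact counitLast_natural k H f
  | succ m ih =>
    show LinearMap.rTensor H (opCounit k H (M := Y) m) ∘ₗ
        LinearMap.rTensor H (tpowMap k H f (1 + m)) =
      LinearMap.rTensor H (tpowMap k H f (0 + m)) ∘ₗ
        LinearMap.rTensor H (opCounit k H (M := X) m)
    rw [← LinearMap.rTensor_comp, ih, LinearMap.rTensor_comp]

/-- naturality of the "mulLast + antLast" block. -/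
lemma mulAnt_natural (f : X →ₗ[k] Y) :
    (mulLast k H (Y ⊗[k] H) ∘ₗ antLast k H ((Y ⊗[k] H) ⊗[k] H)) ∘ₗ
      LinearMap.rTensor H (LinearMap.rTensor H (LinearMap.rTensor H f)) =
    LinearMap.rTensor H (LinearMap.rTensor H f) ∘ₗ
      (mulLast k H (X ⊗[k] H) ∘ₗ antLast k H ((X ⊗[k] H) ⊗[k] H)) := by
  ext x h1 h2 h3
  simp [mulLast, antLast]

lemma opA2L_natural (f : X →ₗ[k] Y) : ∀ m : ℕ,
    opA2L k H (M := Y) m ∘ₗ tpowMap k H f (2 + m) =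
    tpowMap k H f (2 + m) ∘ₗ opA2L k H (M := X) m := by
  intro m
  induction m with
  | zero =>
    calc (mulLast k H (Y ⊗[k] H) ∘ₗ antLast k H ((Y ⊗[k] H) ⊗[k] H)) ∘ₗ
          (LinearMap.rTensor H (comulLast k H Y) ∘ₗ
            LinearMap.rTensor H (LinearMap.rTensor H f))
        = (mulLast k H (Y ⊗[k] H) ∘ₗ antLast k H ((Y ⊗[k] H) ⊗[k] H)) ∘ₗ
          (LinearMap.rTensor H (LinearMap.rTensor H (LinearMap.rTensor H f)) ∘ₗ
            LinearMap.rTensor H (comulLast k H X)) := by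
          rw [← LinearMap.rTensor_comp, comulLast_natural, LinearMap.rTensor_comp]
      _ = ((mulLast k H (Y ⊗[k] H) ∘ₗ antLast k H ((Y ⊗[k] H) ⊗[k] H)) ∘ₗ
            LinearMap.rTensor H (LinearMap.rTensor H (LinearMap.rTensor H f))) ∘ₗ
            LinearMap.rTensor H (comulLast k H X) := rfl
      _ = (LinearMap.rTensor H (LinearMap.rTensor H f) ∘ₗ
            (mulLast k H (X ⊗[k] H) ∘ₗ antLast k H ((X ⊗[k] H) ⊗[k] H))) ∘ₗ
            LinearMap.rTensor H (comulLast k H X) := by rw [mulAnt_natural]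
      _ = _ := rfl
  | succ m ih =>
    show LinearMap.rTensor H (opA2L k H (M := Y) m) ∘ₗ
        LinearMap.rTensor H (tpowMap k H f (2 + m)) =
      LinearMap.rTensor H (tpowMap k H f (2 + m)) ∘ₗ
        LinearMap.rTensor H (opA2L k H (M := X) m)
    rw [← LinearMap.rTensor_comp, ih, LinearMap.rTensor_comp]

lemma opA2R_natural (f : X →ₗ[k] Y) : ∀ m : ℕ,
    opA2R k H (M := Y) m ∘ₗ tpowMap k H f (3 + m) =
    tpowMap k H f (2 + m) ∘ₗ opA2R k H (M := X) m := by
  intro m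
  induction m with
  | zero => exact mulAnt_natural k H f
  | succ m ih =>
    show LinearMap.rTensor H (opA2R k H (M := Y) m) ∘ₗ
        LinearMap.rTensor H (tpowMap k H f (3 + m)) =
      LinearMap.rTensor H (tpowMap k H f (2 + m)) ∘ₗ
        LinearMap.rTensor H (opA2R k H (M := X) m)
    rw [← LinearMap.rTensor_comp, ih, LinearMap.rTensor_comp]

/-- naturality of the "rTensor mulLast + rTensor antLast" block. -/
lemma rmulAnt_natural (f : X →ₗ[k] Y) :
    (LinearMap.rTensor H (mulLast k H Y) ∘ₗ
      LinearMap.rTensor H (antLast k H (Y ⊗[k] H))) ∘ₗ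
      LinearMap.rTensor H (LinearMap.rTensor H (LinearMap.rTensor H f)) =
    LinearMap.rTensor H (LinearMap.rTensor H f) ∘ₗ
      (LinearMap.rTensor H (mulLast k H X) ∘ₗ
        LinearMap.rTensor H (antLast k H (X ⊗[k] H))) := by
  ext x h1 h2 h3
  simp [mulLast, antLast]

lemma opA3L_natural (f : X →ₗ[k] Y) : ∀ m : ℕ,
    opA3L k H (M := Y) m ∘ₗ tpowMap k H f (2 + m) =
    tpowMap k H f (2 + m) ∘ₗ opA3L k H (M := X) m := by
  intro m
  induction m with
  | zero =>
    calc (LinearMap.rTensor H (mulLast k H Y) ∘ₗ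
          LinearMap.rTensor H (antLast k H (Y ⊗[k] H))) ∘ₗ
          (comulLast k H (Y ⊗[k] H) ∘ₗ LinearMap.rTensor H (LinearMap.rTensor H f))
        = (LinearMap.rTensor H (mulLast k H Y) ∘ₗ
            LinearMap.rTensor H (antLast k H (Y ⊗[k] H))) ∘ₗ
          (LinearMap.rTensor H (LinearMap.rTensor H (LinearMap.rTensor H f)) ∘ₗ
            comulLast k H (X ⊗[k] H)) := by
          rw [comulLast_natural k H (LinearMap.rTensor H f)]
      _ = ((LinearMap.rTensor H (mulLast k H Y) ∘ₗ
            LinearMap.rTensor H (antLast k H (Y ⊗[k] H))) ∘ₗ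
            LinearMap.rTensor H (LinearMap.rTensor H (LinearMap.rTensor H f))) ∘ₗ
            comulLast k H (X ⊗[k] H) := rfl
      _ = (LinearMap.rTensor H (LinearMap.rTensor H f) ∘ₗ
            (LinearMap.rTensor H (mulLast k H X) ∘ₗ
              LinearMap.rTensor H (antLast k H (X ⊗[k] H)))) ∘ₗ
            comulLast k H (X ⊗[k] H) := by rw [rmulAnt_natural]
      _ = _ := rfl
  | succ m ih =>
    show LinearMap.rTensor H (opA3L k H (M := Y) m) ∘ₗ
        LinearMap.rTensor H (tpowMap k H f (2 + m)) =
      LinearMap.rTensor H (tpowMap k H f (2 + m)) ∘ₗ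
        LinearMap.rTensor H (opA3L k H (M := X) m)
    rw [← LinearMap.rTensor_comp, ih, LinearMap.rTensor_comp]

lemma opA3R_natural (f : X →ₗ[k] Y) : ∀ m : ℕ,
    opA3R k H (M := Y) m ∘ₗ tpowMap k H f (3 + m) =
    tpowMap k H f (2 + m) ∘ₗ opA3R k H (M := X) m := by
  intro m
  induction m with
  | zero => exact rmulAnt_natural k H f
  | succ m ih =>
    show LinearMap.rTensor H (opA3R k H (M := Y) m) ∘ₗ
        LinearMap.rTensor H (tpowMap k H f (3 + m)) =
      LinearMap.rTensor H (tpowMap k H f (2 + m)) ∘ₗ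
        LinearMap.rTensor H (opA3R k H (M := X) m)
    rw [← LinearMap.rTensor_comp, ih, LinearMap.rTensor_comp]

section PCMLevels

variable {ρ : X →ₗ[k] X ⊗[k] H} (h : IsPartialComodule k H ρ)

include h in
lemma pcm_L1 : ∀ m : ℕ,
    opCounit k H (M := X) m ∘ₗ coactPow k H ρ (1 + m) = coactPow k H ρ (0 + m) := by
  intro m
  induction m with
  | zero =>
    apply LinearMap.ext
    intro x
    exact LinearMap.congr_fun h.counit x
  | succ m ih =>
    rw [coactPow_add_succ k H ρ 1 m, coactPow_add_succ k H ρ 0 m, opCounit_succ]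
    show LinearMap.rTensor H (opCounit k H (M := X) m) ∘ₗ
        (LinearMap.rTensor H (coactPow k H ρ (1 + m)) ∘ₗ ρ) =
      LinearMap.rTensor H (coactPow k H ρ (0 + m)) ∘ₗ ρ
    rw [← LinearMap.comp_assoc, ← LinearMap.rTensor_comp, ih]

include h in
lemma pcm_L2 : ∀ m : ℕ,
    opA2L k H (M := X) m ∘ₗ coactPow k H ρ (2 + m) =
    opA2R k H (M := X) m ∘ₗ coactPow k H ρ (3 + m) := by
  intro m
  induction m with
  | zero =>
    apply LinearMap.ext
    intro x
    exact LinearMap.congr_fun h.pcm2 x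
  | succ m ih =>
    rw [coactPow_add_succ k H ρ 2 m, coactPow_add_succ k H ρ 3 m, opA2L_succ, opA2R_succ]
    show LinearMap.rTensor H (opA2L k H (M := X) m) ∘ₗ
        (LinearMap.rTensor H (coactPow k H ρ (2 + m)) ∘ₗ ρ) =
      LinearMap.rTensor H (opA2R k H (M := X) m) ∘ₗ
        (LinearMap.rTensor H (coactPow k H ρ (3 + m)) ∘ₗ ρ)
    rw [← LinearMap.comp_assoc, ← LinearMap.rTensor_comp, ih,
      ← LinearMap.comp_assoc, ← LinearMap.rTensor_comp]

include h in
lemma pcm_L3 : ∀ m : ℕ,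
    opA3L k H (M := X) m ∘ₗ coactPow k H ρ (2 + m) =
    opA3R k H (M := X) m ∘ₗ coactPow k H ρ (3 + m) := by
  intro m
  induction m with
  | zero =>
    apply LinearMap.ext
    intro x
    exact LinearMap.congr_fun h.pcm3 x
  | succ m ih =>
    rw [coactPow_add_succ k H ρ 2 m, coactPow_add_succ k H ρ 3 m, opA3L_succ, opA3R_succ]
    show LinearMap.rTensor H (opA3L k H (M := X) m) ∘ₗ
        (LinearMap.rTensor H (coactPow k H ρ (2 + m)) ∘ₗ ρ) =
      LinearMap.rTensor H (opA3R k H (M := X) m) ∘ₗ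
        (LinearMap.rTensor H (coactPow k H ρ (3 + m)) ∘ₗ ρ)
    rw [← LinearMap.comp_assoc, ← LinearMap.rTensor_comp, ih,
      ← LinearMap.comp_assoc, ← LinearMap.rTensor_comp]

end PCMLevels



end MyAux

section Largest

variable (k : Type u) [Field k] (H : Type u) [Ring H] [HopfAlgebra k H]
variable {M : Type u} [AddCommGroup M] [Module k M]

/-- The element `mm ∈ M` satisfies conditions (A1), (A2) and (A3) for all `n = m + 1 ≥ 1`. -/
def SatisfiesA (ρ : M →ₗ[k] M ⊗[k] H) (mm : M) : Prop :=
  (∀ m : ℕ, opCounit k H m (coactPow k H ρ (1 + m) mm) = coactPow k H ρ (0 + m) mm) ∧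
  (∀ m : ℕ, opA2L k H m (coactPow k H ρ (2 + m) mm) =
    opA2R k H m (coactPow k H ρ (3 + m) mm)) ∧
  (∀ m : ℕ, opA3L k H m (coactPow k H ρ (2 + m) mm) =
    opA3R k H m (coactPow k H ρ (3 + m) mm))

section Bridge2
variable {X Y : Type u} [AddCommGroup X] [Module k X] [AddCommGroup Y] [Module k Y]

section Bridge

variable (ρX : X →ₗ[k] X ⊗[k] H) (ρY : Y →ₗ[k] Y ⊗[k] H) (f : X →ₗ[k] Y)
variable (key : LinearMap.rTensor H f ∘ₗ ρX = ρY ∘ₗ f)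

include key in
lemma satisfiesA_of_isPartialComodule (h : IsPartialComodule k H ρX) (x : X) :
    SatisfiesA k H ρY (f x) := by
  have cnat' : ∀ n x, tpowMap k H f n (coactPow k H ρX n x) = coactPow k H ρY n (f x) :=
    fun n x => by simpa using LinearMap.congr_fun (coactPow_natural k H ρX ρY f key n) x
  have ocn' : ∀ m y, opCounit k H m (tpowMap k H f (1 + m) y) =
      tpowMap k H f (0 + m) (opCounit k H m y) :=
    fun m y => by simpa using LinearMap.congr_fun (opCounit_natural k H f m) y
  have a2l' : ∀ m y, opA2L k H m (tpowMap k H f (2 + m) y) =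
      tpowMap k H f (2 + m) (opA2L k H m y) :=
    fun m y => by simpa using LinearMap.congr_fun (opA2L_natural k H f m) y
  have a2r' : ∀ m y, opA2R k H m (tpowMap k H f (3 + m) y) =
      tpowMap k H f (2 + m) (opA2R k H m y) :=
    fun m y => by simpa using LinearMap.congr_fun (opA2R_natural k H f m) y
  have a3l' : ∀ m y, opA3L k H m (tpowMap k H f (2 + m) y) =
      tpowMap k H f (2 + m) (opA3L k H m y) :=
    fun m y => by simpa using LinearMap.congr_fun (opA3L_natural k H f m) y
  have a3r' : ∀ m y, opA3R k H m (tpowMap k H f (3 + m) y) =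
      tpowMap k H f (2 + m) (opA3R k H m y) :=
    fun m y => by simpa using LinearMap.congr_fun (opA3R_natural k H f m) y
  have L1' : ∀ m x, opCounit k H m (coactPow k H ρX (1 + m) x) = coactPow k H ρX (0 + m) x :=
    fun m x => by simpa using LinearMap.congr_fun (pcm_L1 k H h m) x
  have L2' : ∀ m x, opA2L k H m (coactPow k H ρX (2 + m) x) =
      opA2R k H m (coactPow k H ρX (3 + m) x) :=
    fun m x => by simpa using LinearMap.congr_fun (pcm_L2 k H h m) x
  have L3' : ∀ m x, opA3L k H m (coactPow k H ρX (2 + m) x) =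
      opA3R k H m (coactPow k H ρX (3 + m) x) :=
    fun m x => by simpa using LinearMap.congr_fun (pcm_L3 k H h m) x
  refine ⟨fun m => ?_, fun m => ?_, fun m => ?_⟩
  · rw [← cnat' (1 + m) x, ocn' m, L1' m, cnat' (0 + m)]
  · rw [← cnat' (2 + m) x, ← cnat' (3 + m) x, a2l' m, a2r' m, L2' m]
  · rw [← cnat' (2 + m) x, ← cnat' (3 + m) x, a3l' m, a3r' m, L3' m]

include key in
lemma isPartialComodule_of_satisfiesA (hf : Function.Injective f)
    (hA : ∀ x : X, SatisfiesA k H ρY (f x)) : IsPartialComodule k H ρX := by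
  have cnat' : ∀ n x, tpowMap k H f n (coactPow k H ρX n x) = coactPow k H ρY n (f x) :=
    fun n x => by simpa using LinearMap.congr_fun (coactPow_natural k H ρX ρY f key n) x
  have a2l' : ∀ m y, opA2L k H m (tpowMap k H f (2 + m) y) =
      tpowMap k H f (2 + m) (opA2L k H m y) :=
    fun m y => by simpa using LinearMap.congr_fun (opA2L_natural k H f m) y
  have a2r' : ∀ m y, opA2R k H m (tpowMap k H f (3 + m) y) =
      tpowMap k H f (2 + m) (opA2R k H m y) :=
    fun m y => by simpa using LinearMap.congr_fun (opA2R_natural k H f m) y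
  have a3l' : ∀ m y, opA3L k H m (tpowMap k H f (2 + m) y) =
      tpowMap k H f (2 + m) (opA3L k H m y) :=
    fun m y => by simpa using LinearMap.congr_fun (opA3L_natural k H f m) y
  have a3r' : ∀ m y, opA3R k H m (tpowMap k H f (3 + m) y) =
      tpowMap k H f (2 + m) (opA3R k H m y) :=
    fun m y => by simpa using LinearMap.congr_fun (opA3R_natural k H f m) y
  have keyp : ∀ x, LinearMap.rTensor H f (ρX x) = ρY (f x) :=
    fun x => by simpa using LinearMap.congr_fun key x
  have cL : ∀ t, counitLast k H Y (LinearMap.rTensor H f t) = f (counitLast k H X t) :=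
    fun t => by simpa using LinearMap.congr_fun (counitLast_natural k H f) t
  refine ⟨?_, ?_, ?_⟩
  · apply LinearMap.ext; intro x
    apply hf
    show f (counitLast k H X (ρX x)) = f x
    rw [← cL, keyp]
    exact (hA x).1 0
  · apply LinearMap.ext; intro x
    apply tpowMap_injective k H f hf 2
    show tpowMap k H f 2 (opA2L k H 0 (coactPow k H ρX 2 x)) =
      tpowMap k H f 2 (opA2R k H 0 (coactPow k H ρX 3 x))
    rw [← a2l' 0, ← a2r' 0]
    show opA2L k H 0 (tpowMap k H f (2 + 0) (coactPow k H ρX (2 + 0) x)) =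
      opA2R k H 0 (tpowMap k H f (3 + 0) (coactPow k H ρX (3 + 0) x))
    rw [cnat' (2 + 0), cnat' (3 + 0)]
    exact (hA x).2.1 0
  · apply LinearMap.ext; intro x
    apply tpowMap_injective k H f hf 2
    show tpowMap k H f 2 (opA3L k H 0 (coactPow k H ρX 2 x)) =
      tpowMap k H f 2 (opA3R k H 0 (coactPow k H ρX 3 x))
    rw [← a3l' 0, ← a3r' 0]
    show opA3L k H 0 (tpowMap k H f (2 + 0) (coactPow k H ρX (2 + 0) x)) =
      opA3R k H 0 (tpowMap k H f (3 + 0) (coactPow k H ρX (3 + 0) x))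
    rw [cnat' (2 + 0), cnat' (3 + 0)]
    exact (hA x).2.2 0

end Bridge

section FinsuppNat

variable {ι : Type u} [DecidableEq ι]

lemma equivFinsupp_natural (b : Module.Basis ι k H) (g : X →ₗ[k] Y) (t : X ⊗[k] H) (i : ι) :
    TensorProduct.equivFinsuppOfBasisRight b (LinearMap.rTensor H g t) i =
    g (TensorProduct.equivFinsuppOfBasisRight b t i) := by
  induction t using TensorProduct.induction_on with
  | zero => simp
  | tmul x h =>
    simp [TensorProduct.equivFinsuppOfBasisRight_apply_tmul_apply]
  | add a c ha hc => simp [map_add, ha, hc]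

end FinsuppNat

end Bridge2

/-- For an arbitrary linear map `ρ : M → M ⊗ H`, the set `N` of elements
satisfying (A1), (A2), (A3) for all `n ≥ 1` is the largest subspace of `M` which is invariant
under `ρ` and on which `ρ` restricts to a partial `H`-comodule structure; in particular it
contains every such subspace. -/
theorem largest_partial_subcomodule (ρ : M →ₗ[k] M ⊗[k] H) :
    ∃ N : Submodule k M,
      (↑N = { mm : M | SatisfiesA k H ρ mm }) ∧
      IsSubcomodule k H ρ N ∧
      (∃ ρN : N →ₗ[k] N ⊗[k] H,
        LinearMap.rTensor H N.subtype ∘ₗ ρN = ρ ∘ₗ N.subtype ∧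
        IsPartialComodule k H ρN) ∧
      (∀ N' : Submodule k M, IsSubcomodule k H ρ N' →
        (∃ ρN' : N' →ₗ[k] N' ⊗[k] H,
          LinearMap.rTensor H N'.subtype ∘ₗ ρN' = ρ ∘ₗ N'.subtype ∧
          IsPartialComodule k H ρN') →
        N' ≤ N) := by
  classical
  let N : Submodule k M :=
    { carrier := { mm : M | SatisfiesA k H ρ mm }
      add_mem' := fun {a b} ha hb =>
        ⟨fun m => by simp only [map_add, ha.1 m, hb.1 m],
         fun m => by simp only [map_add, ha.2.1 m, hb.2.1 m],
         fun m => by simp only [map_add, ha.2.2 m, hb.2.2 m]⟩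
      zero_mem' :=
        ⟨fun m => by simp only [map_zero], fun m => by simp only [map_zero],
         fun m => by simp only [map_zero]⟩
      smul_mem' := fun c a ha =>
        ⟨fun m => by simp only [map_smul, ha.1 m],
         fun m => by simp only [map_smul, ha.2.1 m],
         fun m => by simp only [map_smul, ha.2.2 m]⟩ }
  have hinv : IsSubcomodule k H ρ N := by
    intro mm hmm
    letI : DecidableEq (Module.Basis.ofVectorSpaceIndex k H) := Classical.decEq _
    set b := Module.Basis.ofVectorSpace k H with hb
    set c := TensorProduct.equivFinsuppOfBasisRight (M := M) b (ρ mm) with hc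
    have gen : ∀ (P : Type u) [AddCommGroup P] [Module k P] (g g' : M →ₗ[k] P) (i),
        LinearMap.rTensor H g (ρ mm) = LinearMap.rTensor H g' (ρ mm) →
        g (c i) = g' (c i) := by
      intro P _ _ g g' i hgg
      rw [hc, ← equivFinsupp_natural k H b g, ← equivFinsupp_natural k H b g', hgg]
    have hcomp : ∀ i, (c i) ∈ N := by
      intro i
      refine ⟨fun m => ?_, fun m => ?_, fun m => ?_⟩
      · refine gen _ (opCounit k H m ∘ₗ coactPow k H ρ (1 + m)) (coactPow k H ρ (0 + m)) i ?_
        have h1 := hmm.1 (m + 1)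
        rw [coactPow_add_succ k H ρ 1 m, coactPow_add_succ k H ρ 0 m, opCounit_succ] at h1
        rw [LinearMap.rTensor_comp]
        exact h1
      · refine gen _ (opA2L k H m ∘ₗ coactPow k H ρ (2 + m))
          (opA2R k H m ∘ₗ coactPow k H ρ (3 + m)) i ?_
        have h1 := hmm.2.1 (m + 1)
        rw [coactPow_add_succ k H ρ 2 m, coactPow_add_succ k H ρ 3 m, opA2L_succ,
          opA2R_succ] at h1
        rw [LinearMap.rTensor_comp, LinearMap.rTensor_comp]
        exact h1
      · refine gen _ (opA3L k H m ∘ₗ coactPow k H ρ (2 + m))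
          (opA3R k H m ∘ₗ coactPow k H ρ (3 + m)) i ?_
        have h1 := hmm.2.2 (m + 1)
        rw [coactPow_add_succ k H ρ 2 m, coactPow_add_succ k H ρ 3 m, opA3L_succ,
          opA3R_succ] at h1
        rw [LinearMap.rTensor_comp, LinearMap.rTensor_comp]
        exact h1
    refine ⟨∑ i ∈ c.support, (⟨c i, hcomp i⟩ : N) ⊗ₜ[k] (b i : H), ?_⟩
    have hρ : ρ mm = c.sum fun i m' => m' ⊗ₜ[k] (b i : H) := by
      conv_lhs => rw [← (TensorProduct.equivFinsuppOfBasisRight (M := M) b).symm_apply_apply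
        (ρ mm)]
      rw [← hc, TensorProduct.equivFinsuppOfBasisRight_symm_apply]
    rw [map_sum, hρ, Finsupp.sum]
    simp only [LinearMap.rTensor_tmul, Submodule.coe_subtype]
  have hinj : Function.Injective (LinearMap.rTensor H N.subtype) :=
    Module.Flat.rTensor_preserves_injective_linearMap _ N.injective_subtype
  have hmem : ∀ x : ↥N, (ρ ∘ₗ N.subtype) x ∈ LinearMap.range (LinearMap.rTensor H N.subtype) :=
    fun x => hinv x x.2
  let e : (↥N ⊗[k] H) ≃ₗ[k] LinearMap.range (LinearMap.rTensor H N.subtype) :=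
    LinearEquiv.ofInjective _ hinj
  let ρN : ↥N →ₗ[k] ↥N ⊗[k] H :=
    e.symm.toLinearMap ∘ₗ
      LinearMap.codRestrict (LinearMap.range (LinearMap.rTensor H N.subtype))
        (ρ ∘ₗ N.subtype) hmem
  have key : LinearMap.rTensor H N.subtype ∘ₗ ρN = ρ ∘ₗ N.subtype := by
    apply LinearMap.ext; intro x
    have hF : ∀ z : LinearMap.range (LinearMap.rTensor H N.subtype),
        LinearMap.rTensor H N.subtype (e.symm z) = ↑z := by
      intro z
      conv_rhs => rw [← e.apply_symm_apply z]
      rfl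
    show LinearMap.rTensor H N.subtype (e.symm _) = ρ ↑x
    rw [hF]
    rfl
  refine ⟨N, rfl, hinv,
    ⟨ρN, key, isPartialComodule_of_satisfiesA k H ρN ρ N.subtype key N.injective_subtype
      (fun x => x.2)⟩, ?_⟩
  rintro N' _ ⟨ρN', key', hpc'⟩ mm hmm
  exact satisfiesA_of_isPartialComodule k H ρN' ρ N'.subtype key' hpc' ⟨mm, hmm⟩


end Largest

end
end
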